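/- Let λ be a regular cardinal and X a linearly ordered topological space (with the order topology). If X is [λ, λ]-compact, then X has no gap of type λ. -/

import Mathlib

open Cardinal Set

universe u

/-- `Y` is `l`-full on the right in `X`: for every `y ∈ Y`, the union of the
intervals `(y, y')_X` over larger elements `y' ∈ Y` has cardinality `l`. -/
def FullRight {X : Type u} [LinearOrder X] (l : Cardinal.{u}) (Y : Set X) : Prop :=
  ∀ y ∈ Y, #{x : X | ∃ y' ∈ Y, y < y' ∧ y < x ∧ x < y'} = l

/-- `Y` is `l`-full on the left in `X`. -/
def FullLeft {X : Type u} [LinearOrder X] (l : Cardinal.{u}) (Y : Set X) : Prop :=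
  ∀ y ∈ Y, #{x : X | ∃ y' ∈ Y, y' < y ∧ y' < x ∧ x < y} = l

/-- `Y` is completely `l`-full in `X`: every interval of `X` between two
elements of `Y` has cardinality `l`. -/
def CompletelyFull {X : Type u} [LinearOrder X] (l : Cardinal.{u}) (Y : Set X) : Prop :=
  ∀ y ∈ Y, ∀ y' ∈ Y, y < y' → #{x : X | y < x ∧ x < y'} = l
/-- `X` is `[l, l]`-compact: every open cover of cardinality `≤ l` has a
subcover of cardinality `< l`. -/
def CompactCC (l : Cardinal.{u}) (X : Type u) [TopologicalSpace X] : Prop :=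
  ∀ 𝒰 : Set (Set X), (∀ U ∈ 𝒰, IsOpen U) → ⋃₀ 𝒰 = Set.univ → #𝒰 ≤ l →
    ∃ 𝒱 ⊆ 𝒰, ⋃₀ 𝒱 = Set.univ ∧ #𝒱 < l

/-- `(A, B)` is a gap of the linearly ordered topological space `X`. -/
def IsGap {X : Type u} [LinearOrder X] [TopologicalSpace X] (A B : Set X) : Prop :=
  IsOpen A ∧ IsOpen B ∧ A ∪ B = Set.univ ∧ A.Nonempty ∧ B.Nonempty ∧
  (∀ a ∈ A, ∀ b ∈ B, a < b) ∧
  (∀ a ∈ A, ∃ a' ∈ A, a < a') ∧ (∀ b ∈ B, ∃ b' ∈ B, b' < b)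

/-- The cofinality of a subset `A` of a linear order: the least cardinality of
a subset of `A` cofinal in `A`. -/
noncomputable def setCof {X : Type u} [LinearOrder X] (A : Set X) : Cardinal :=
  sInf {c | ∃ S ⊆ A, (∀ a ∈ A, ∃ s ∈ S, a ≤ s) ∧ #S = c}

/-- The coinitiality of a subset `B` of a linear order: the least cardinality
of a subset of `B` coinitial in `B`. -/
noncomputable def setCoi {X : Type u} [LinearOrder X] (B : Set X) : Cardinal :=
  sInf {c | ∃ S ⊆ B, (∀ b ∈ B, ∃ s ∈ S, s ≤ b) ∧ #S = c}

/-- `k` is a type of the gap `(A, B)`. -/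
def GapHasType {X : Type u} [LinearOrder X] (A B : Set X) (k : Cardinal) : Prop :=
  setCof A = k ∨ setCoi B = k


lemma key {X : Type u} [LinearOrder X] [TopologicalSpace X] [OrderTopology X]
    (l : Cardinal.{u}) (hl : l.IsRegular) (hc : CompactCC l X) (A B : Set X)
    (hg : IsGap A B) : setCof A ≠ l := by
  obtain ⟨hAo, hBo, hAB, hAne, hBne, hlt, hAnm, hBnm⟩ := hg
  intro hcof
  -- obtain a cofinal subset S of A of cardinality l
  have hne : {c | ∃ S ⊆ A, (∀ a ∈ A, ∃ s ∈ S, a ≤ s) ∧ #S = c}.Nonempty :=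
    ⟨#A, A, subset_rfl, fun a ha => ⟨a, ha, le_rfl⟩, rfl⟩
  have hmem := csInf_mem hne
  rw [show sInf {c | ∃ S ⊆ A, (∀ a ∈ A, ∃ s ∈ S, a ≤ s) ∧ #S = c} = setCof A from rfl,
    hcof] at hmem
  obtain ⟨S, hSA, hScof, hScard⟩ := hmem
  set 𝒰 : Set (Set X) := (fun s => Iio s) '' S ∪ {B} with h𝒰
  have hopen : ∀ U ∈ 𝒰, IsOpen U := by
    rintro U (⟨s, _, rfl⟩ | rfl)
    · exact isOpen_Iio
    · exact hBo
  have hcover : ⋃₀ 𝒰 = Set.univ := by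
    apply eq_univ_of_forall
    intro x
    have hx : x ∈ A ∪ B := hAB ▸ mem_univ x
    rcases hx with hx | hx
    · obtain ⟨a', ha', hxa'⟩ := hAnm x hx
      obtain ⟨s, hs, ha's⟩ := hScof a' ha'
      exact ⟨Iio s, Or.inl ⟨s, hs, rfl⟩, lt_of_lt_of_le hxa' ha's⟩
    · exact ⟨B, Or.inr rfl, hx⟩
  have hcard : #𝒰 ≤ l := by
    calc #𝒰 ≤ #((fun s => Iio s) '' S) + #({B} : Set (Set X)) := mk_union_le _ _
    _ ≤ #S + 1 := by
        gcongr
        · exact mk_image_le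
        · simp
    _ = l + 1 := by rw [hScard]
    _ = l := by
        rw [Cardinal.add_one_eq hl.aleph0_le]
  obtain ⟨𝒱, h𝒱𝒰, h𝒱cov, h𝒱card⟩ := hc 𝒰 hopen hcover hcard
  set T : Set X := {s ∈ S | Iio s ∈ 𝒱} with hT
  have hTcard : #T ≤ #𝒱 := by
    apply Cardinal.mk_le_of_injective (f := fun s : T => (⟨Iio s.1, s.2.2⟩ : 𝒱))
    intro s s' h
    exact Subtype.ext (Iio_injective (congrArg Subtype.val h))
  have hTA : T ⊆ A := fun s hs => hSA hs.1
  have hnotcof : ¬ ∀ a ∈ A, ∃ s ∈ T, a ≤ s := by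
    intro hcof'
    have : setCof A ≤ #T := csInf_le' ⟨T, hTA, hcof', rfl⟩
    exact absurd (this.trans_lt (hTcard.trans_lt h𝒱card)) (by simp [hcof])
  push_neg at hnotcof
  obtain ⟨a, ha, hadom⟩ := hnotcof
  have : a ∈ ⋃₀ 𝒱 := h𝒱cov ▸ mem_univ a
  obtain ⟨V, hV𝒱, haV⟩ := this
  rcases h𝒱𝒰 hV𝒱 with ⟨s, hsS, rfl⟩ | rfl
  · exact absurd haV (not_lt.2 (hadom s ⟨hsS, hV𝒱⟩).le)
  · exact absurd (hlt a ha a haV) (lt_irrefl a)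

theorem stmt14 (l : Cardinal.{u}) (hl : l.IsRegular) (X : Type u)
    [LinearOrder X] [TopologicalSpace X] [OrderTopology X]
    (hc : CompactCC l X) :
    ¬ ∃ A B : Set X, IsGap A B ∧ GapHasType A B l := by
  rintro ⟨A, B, hg, hty | hty⟩
  · exact key l hl hc A B hg hty
  · have hg' : IsGap (X := Xᵒᵈ) (B : Set Xᵒᵈ) (A : Set Xᵒᵈ) := by
      obtain ⟨hAo, hBo, hAB, hAne, hBne, hlt, hAnm, hBnm⟩ := hg
      exact ⟨hBo, hAo, by exact (Set.union_comm B A).trans hAB, hBne, hAne,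
        fun b hb a ha => hlt a ha b hb, hBnm, hAnm⟩
    have hc' : CompactCC l Xᵒᵈ := hc
    have : setCof (X := Xᵒᵈ) (B : Set Xᵒᵈ) = setCoi B := rfl
    exact key l hl hc' (B : Set Xᵒᵈ) (A : Set Xᵒᵈ) hg' (this.trans hty)
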